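/- In ℚ[[q]][[x]], the identity exp(∑_{k≥1} x^k/(k(1-q^k))) = e_q(x/(1-q)) holds, where e_q(y) = ∑_{n≥0} y^n/[n]_q! is the q-exponential function. -/

import Mathlib

/-- Formal exponential of a power series (with zero constant term) over a `ℚ`-algebra. -/
noncomputable def ExpPS {A : Type*} [CommRing A] [Algebra ℚ A] (f : PowerSeries A) :
    PowerSeries A :=
  PowerSeries.mk fun n =>
    PowerSeries.coeff n (∑ m ∈ Finset.range (n + 1), ((m.factorial : ℚ)⁻¹) • f ^ m)

/-- The q-factorial `[n]_q! = ∏_{j=1}^n (1 + q + ⋯ + q^{j-1})`. -/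
noncomputable def qFact (n : ℕ) : PowerSeries ℚ :=
  ∏ j ∈ Finset.Icc 1 n, ∑ i ∈ Finset.range j, (PowerSeries.X : PowerSeries ℚ) ^ i

open Finset

section FieldLemma
variable {F : Type*} [Field F]

/-- `uF x k = (1 - x^k)⁻¹`. -/
noncomputable def uF (x : F) (k : ℕ) : F := (1 - x ^ k)⁻¹

/-- `bF x n = (∏_{j=1}^n (1-x^j))⁻¹`. -/
noncomputable def bF (x : F) (n : ℕ) : F := (∏ j ∈ Finset.Icc 1 n, (1 - x ^ j))⁻¹

lemma bF_zero (x : F) : bF x 0 = 1 := by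
  simp [bF]

lemma bF_succ (x : F) (n : ℕ) : bF x (n + 1) = bF x n * uF x (n + 1) := by
  unfold bF uF
  rw [Finset.prod_Icc_succ_top (by omega : 1 ≤ n + 1), mul_inv]

variable {x : F} (hx : ∀ k, 1 ≤ k → (1 : F) - x ^ k ≠ 0)
include hx

lemma uF_shift (k : ℕ) (hk : 1 ≤ k) : x ^ k * uF x k = uF x k - 1 := by
  have h := hx k hk
  unfold uF
  field_simp
  ring

lemma uF_pf (a b : ℕ) (ha : 1 ≤ a) (hb : 1 ≤ b) :
    uF x a * uF x b = uF x (a + b) * (uF x b + x ^ a * uF x a) := by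
  have h1 := hx a ha
  have h2 := hx b hb
  have h3 := hx (a + b) (by omega)
  unfold uF
  field_simp
  ring

lemma keyF (n : ℕ) :
    ∑ k ∈ Finset.range n, uF x (k + 1) * bF x (n - (k + 1)) = (n : F) * bF x n := by
  induction n with
  | zero => simp
  | succ n ih =>
    rw [Finset.sum_range_succ]
    have hlast : uF x (n + 1) * bF x (n + 1 - (n + 1)) = uF x (n + 1) := by
      simp [bF_zero]
    have hterm : ∀ k ∈ Finset.range n,
        uF x (k + 1) * bF x (n + 1 - (k + 1))
          = uF x (n + 1) * (uF x (n - k) * bF x (n - (k + 1))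
              + x ^ (k + 1) * uF x (k + 1) * bF x (n - (k + 1))) := by
      intro k hk
      have hkn : k < n := Finset.mem_range.mp hk
      have h1 : n + 1 - (k + 1) = (n - (k + 1)) + 1 := by omega
      have h2 : n - (k + 1) + 1 = n - k := by omega
      rw [h1, bF_succ, h2]
      have hpf := uF_pf hx (k + 1) (n - k) (by omega) (by omega)
      have h3 : (k + 1) + (n - k) = n + 1 := by omega
      rw [h3] at hpf
      calc uF x (k + 1) * (bF x (n - (k + 1)) * uF x (n - k))
          = (uF x (k + 1) * uF x (n - k)) * bF x (n - (k + 1)) := by ring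
        _ = uF x (n + 1) * (uF x (n - k) * bF x (n - (k + 1))
              + x ^ (k + 1) * uF x (k + 1) * bF x (n - (k + 1))) := by rw [hpf]; ring
    rw [Finset.sum_congr rfl hterm, hlast]
    have hA : ∑ k ∈ Finset.range n, uF x (n - k) * bF x (n - (k + 1))
        = ∑ j ∈ Finset.range n, bF x (j + 1) := by
      calc ∑ k ∈ Finset.range n, uF x (n - k) * bF x (n - (k + 1))
          = ∑ k ∈ Finset.range n, (fun j => uF x (j + 1) * bF x j) (n - 1 - k) := by
            refine Finset.sum_congr rfl fun k hk => ?_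
            have hkn : k < n := Finset.mem_range.mp hk
            have e1 : n - 1 - k + 1 = n - k := by omega
            have e2 : n - 1 - k = n - (k + 1) := by omega
            simp only [e1, e2]
            rw [show n - (k + 1) + 1 = n - k by omega]
        _ = ∑ j ∈ Finset.range n, uF x (j + 1) * bF x j :=
            Finset.sum_range_reflect (fun j => uF x (j + 1) * bF x j) n
        _ = ∑ j ∈ Finset.range n, bF x (j + 1) := by
            refine Finset.sum_congr rfl fun j hj => ?_
            rw [bF_succ, mul_comm]
    have hB : ∑ k ∈ Finset.range n, x ^ (k + 1) * uF x (k + 1) * bF x (n - (k + 1))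
        = (n : F) * bF x n - ∑ j ∈ Finset.range n, bF x j := by
      have : ∀ k ∈ Finset.range n,
          x ^ (k + 1) * uF x (k + 1) * bF x (n - (k + 1))
            = uF x (k + 1) * bF x (n - (k + 1)) - bF x (n - (k + 1)) := by
        intro k hk
        rw [uF_shift hx (k + 1) (by omega)]
        ring
      rw [Finset.sum_congr rfl this, Finset.sum_sub_distrib, ih]
      congr 1
      calc ∑ k ∈ Finset.range n, bF x (n - (k + 1))
          = ∑ k ∈ Finset.range n, (fun j => bF x j) (n - 1 - k) := by
            refine Finset.sum_congr rfl fun k hk => ?_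
            have hkn : k < n := Finset.mem_range.mp hk
            have e2 : n - 1 - k = n - (k + 1) := by omega
            simp only [e2]
        _ = ∑ j ∈ Finset.range n, bF x j := Finset.sum_range_reflect (fun j => bF x j) n
    simp only [mul_add, Finset.sum_add_distrib, ← Finset.mul_sum]
    rw [hA, hB]
    have htel : ∑ j ∈ Finset.range n, bF x (j + 1)
        = (∑ j ∈ Finset.range (n + 1), bF x j) - bF x 0 := by
      rw [Finset.sum_range_succ' (fun j => bF x j) n]; ring
    have htel2 : ∑ j ∈ Finset.range n, bF x j
        = (∑ j ∈ Finset.range (n + 1), bF x j) - bF x n := by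
      rw [Finset.sum_range_succ (fun j => bF x j) n]; ring
    rw [htel, htel2, bF_zero, bF_succ]
    push_cast
    ring

end FieldLemma


section PowerSeriesSide

open PowerSeries

local notation "R" => PowerSeries ℚ

/-- `P n = ∏_{j=1}^n (1 - q^j)` in `ℚ[[q]]`. -/
noncomputable def Pprod (n : ℕ) : R := ∏ j ∈ Finset.Icc 1 n, (1 - (X : R) ^ j)

lemma constCoeff_one_sub_pow (k : ℕ) (hk : 1 ≤ k) :
    constantCoeff (1 - (X : R) ^ k) = 1 := by
  simp [zero_pow (by omega : k ≠ 0)]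

lemma one_sub_pow_ne (k : ℕ) (hk : 1 ≤ k) : (1 - (X : R) ^ k) ≠ 0 := by
  intro h
  have := constCoeff_one_sub_pow k hk
  rw [h] at this
  simp at this

lemma constCoeff_Pprod (n : ℕ) : constantCoeff (Pprod n) = 1 := by
  unfold Pprod
  rw [map_prod]
  refine Finset.prod_eq_one fun j hj => ?_
  exact constCoeff_one_sub_pow j (Finset.mem_Icc.mp hj).1

lemma Pprod_mul_inv (n : ℕ) : Pprod n * (Pprod n)⁻¹ = 1 :=
  PowerSeries.mul_inv_cancel _ (by rw [constCoeff_Pprod]; exact one_ne_zero)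

lemma u_mul_inv (k : ℕ) (hk : 1 ≤ k) :
    (1 - (X : R) ^ k) * (1 - (X : R) ^ k)⁻¹ = 1 :=
  PowerSeries.mul_inv_cancel _ (by rw [constCoeff_one_sub_pow k hk]; exact one_ne_zero)

noncomputable abbrev KK := FractionRing R

noncomputable abbrev φmap : R →+* KK := algebraMap R KK

lemma φinj : Function.Injective φmap := IsFractionRing.injective R KK

lemma hxK : ∀ k, 1 ≤ k → (1 : KK) - (φmap X) ^ k ≠ 0 := by
  intro k hk h
  have : φmap (1 - (X : R) ^ k) = 0 := by
    rw [map_sub, map_one, map_pow]; exact h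
  exact one_sub_pow_ne k hk (φinj (by rw [this, map_zero]))

lemma φ_u (k : ℕ) (hk : 1 ≤ k) : φmap ((1 - (X : R) ^ k)⁻¹) = uF (φmap X) k := by
  have h := congrArg φmap (u_mul_inv k hk)
  rw [map_mul, map_one, map_sub, map_one, map_pow] at h
  exact eq_inv_of_mul_eq_one_left (by rw [mul_comm] at h; exact h)

lemma φ_b (n : ℕ) : φmap ((Pprod n)⁻¹) = bF (φmap X) n := by
  have h := congrArg φmap (Pprod_mul_inv n)
  rw [map_mul, map_one] at h
  have hP : φmap (Pprod n) = ∏ j ∈ Finset.Icc 1 n, (1 - (φmap X) ^ j) := by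
    unfold Pprod
    rw [map_prod]
    exact Finset.prod_congr rfl fun j hj => by rw [map_sub, map_one, map_pow]
  rw [hP] at h
  exact eq_inv_of_mul_eq_one_left (by rw [mul_comm] at h; exact h)

/-- The key recurrence in `ℚ[[q]]`. -/
lemma keyR (n : ℕ) :
    ∑ k ∈ Finset.range n, (1 - (X : R) ^ (k + 1))⁻¹ * (Pprod (n - (k + 1)))⁻¹
      = (n : R) * (Pprod n)⁻¹ := by
  apply φinj
  rw [map_sum, map_mul, map_natCast, φ_b]
  calc ∑ k ∈ Finset.range n, φmap ((1 - (X : R) ^ (k + 1))⁻¹ * (Pprod (n - (k + 1)))⁻¹)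
      = ∑ k ∈ Finset.range n, uF (φmap X) (k + 1) * bF (φmap X) (n - (k + 1)) := by
        refine Finset.sum_congr rfl fun k hk => ?_
        rw [map_mul, φ_u (k + 1) (by omega), φ_b]
    _ = (n : KK) * bF (φmap X) n := keyF hxK n

lemma constCoeff_geom (j : ℕ) (hj : 1 ≤ j) :
    constantCoeff (∑ i ∈ Finset.range j, (X : R) ^ i) = 1 := by
  rw [map_sum]
  rw [Finset.sum_eq_single 0 (fun i _ hi => by simp [zero_pow hi])
    (fun h => absurd (Finset.mem_range.mpr (by omega)) h)]
  simp

lemma constCoeff_qFact (n : ℕ) : constantCoeff (qFact n) = 1 := by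
  unfold qFact
  rw [map_prod]
  exact Finset.prod_eq_one fun j hj => constCoeff_geom j (Finset.mem_Icc.mp hj).1

lemma qFact_mul (n : ℕ) : (1 - (X : R)) ^ n * qFact n = Pprod n := by
  unfold qFact Pprod
  have hpow : (1 - (X : R)) ^ n = ∏ _j ∈ Finset.Icc 1 n, (1 - (X : R)) := by
    rw [Finset.prod_const, Nat.card_Icc]
    norm_num
  rw [hpow, ← Finset.prod_mul_distrib]
  refine Finset.prod_congr rfl fun j hj => ?_
  linear_combination -geom_sum_mul (X : R) j

lemma coeffG_eq (j : ℕ) :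
    ((1 - (X : R))⁻¹) ^ j * (qFact j)⁻¹ = (Pprod j)⁻¹ := by
  rw [PowerSeries.eq_inv_iff_mul_eq_one
    (by rw [constCoeff_Pprod]; exact one_ne_zero)]
  rw [← qFact_mul]
  have h1 : (1 - X : R)⁻¹ * (1 - X) = 1 :=
    PowerSeries.inv_mul_cancel _ (by simp)
  have h2 : (qFact j)⁻¹ * qFact j = 1 :=
    PowerSeries.inv_mul_cancel _ (by rw [constCoeff_qFact]; exact one_ne_zero)
  calc ((1 - (X : R))⁻¹) ^ j * (qFact j)⁻¹ * ((1 - (X : R)) ^ j * qFact j)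
      = (((1 - (X : R))⁻¹) ^ j * (1 - X) ^ j) * ((qFact j)⁻¹ * qFact j) :=
        mul_mul_mul_comm _ _ _ _
    _ = 1 := by rw [← mul_pow, h1, h2, one_pow, one_mul]


end PowerSeriesSide

section ExpSide

open PowerSeries Finset

local notation "R" => PowerSeries ℚ

attribute [local instance 2000] MvPowerSeries.instAlgebra

noncomputable def TrS (g : PowerSeries R) (N : ℕ) : PowerSeries R :=
  ∑ m ∈ Finset.range N, ((m.factorial : ℚ)⁻¹) • g ^ m

lemma coeff_pow_zero {g : PowerSeries R} (hg : constantCoeff g = 0)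
    {m n : ℕ} (h : n < m) : coeff n (g ^ m) = 0 :=
  PowerSeries.X_pow_dvd_iff.mp (pow_dvd_pow_of_dvd (PowerSeries.X_dvd_iff.mpr hg) m) n h

lemma coeff_ExpPS (g : PowerSeries R) (n : ℕ) :
    coeff n (ExpPS g) = coeff n (TrS g (n + 1)) := by
  simp [ExpPS, TrS, coeff_mk]

lemma coeff_TrS_stable {g : PowerSeries R} (hg : constantCoeff g = 0)
    {j N : ℕ} (h : j + 1 ≤ N) :
    coeff j (TrS g N) = coeff j (ExpPS g) := by
  rw [coeff_ExpPS]
  unfold TrS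
  rw [map_sum, map_sum]
  symm
  apply Finset.sum_subset (Finset.range_subset_range.mpr h)
  intro m hm hnm
  have hj : j < m := by
    have h2 : ¬ m < j + 1 := fun hh => hnm (Finset.mem_range.mpr hh)
    omega
  rw [PowerSeries.coeff_smul, coeff_pow_zero hg hj, smul_zero]

lemma qsmul_eq (c : ℚ) (h : PowerSeries R) :
    c • h = C (algebraMap ℚ R c) * h := by
  ext n
  rw [PowerSeries.coeff_smul, PowerSeries.coeff_C_mul, Algebra.smul_def]

lemma am_succ_mul (i : ℕ) :
    algebraMap ℚ R (((i + 1).factorial : ℚ)⁻¹) * ((i : R) + 1)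
      = algebraMap ℚ R ((i.factorial : ℚ)⁻¹) := by
  have h : ((i : R) + 1) = algebraMap ℚ R ((i : ℚ) + 1) := by
    rw [map_add, map_one, map_natCast]
  rw [h, ← map_mul]
  congr 1
  rw [Nat.factorial_succ]
  push_cast
  rw [mul_inv]
  field_simp

lemma derivative_TrS (g : PowerSeries R) (N : ℕ) :
    d⁄dX R (TrS g (N + 1)) = TrS g N * d⁄dX R g := by
  unfold TrS
  simp only [qsmul_eq]
  rw [map_sum]
  rw [Finset.sum_range_succ'
    (fun m => d⁄dX R (C (algebraMap ℚ R ((m.factorial : ℚ)⁻¹)) * g ^ m)) N]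
  have h0 : d⁄dX R (C (algebraMap ℚ R ((Nat.factorial 0 : ℚ)⁻¹)) * g ^ 0) = 0 := by
    simp
  rw [h0, add_zero, Finset.sum_mul]
  refine Finset.sum_congr rfl fun i _ => ?_
  rw [Derivation.leibniz, Derivation.leibniz_pow, derivative_C, smul_zero, add_zero]
  rw [smul_eq_mul, smul_eq_mul]
  have hn : ((i + 1) : ℕ) • (g ^ (i + 1 - 1) * d⁄dX R g)
      = ((i : PowerSeries R) + 1) * (g ^ i * d⁄dX R g) := by
    rw [nsmul_eq_mul]
    push_cast
    rfl
  rw [hn]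
  have hc : ((i : PowerSeries R) + 1) = C ((i : R) + 1) := by
    rw [map_add, map_one, map_natCast]
  rw [hc, ← mul_assoc, ← map_mul, am_succ_mul, mul_assoc]

noncomputable def fexp : PowerSeries R :=
  PowerSeries.mk fun k =>
    if k = 0 then 0
    else ((k : ℚ)⁻¹) • (1 - (PowerSeries.X : PowerSeries ℚ) ^ k)⁻¹

noncomputable def Gser : PowerSeries R :=
  PowerSeries.mk fun n =>
    ((1 - (PowerSeries.X : PowerSeries ℚ))⁻¹) ^ n * (qFact n)⁻¹

lemma hfexp0 : constantCoeff fexp = 0 := by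
  have h : coeff 0 fexp = 0 := by simp [fexp]
  rwa [PowerSeries.coeff_zero_eq_constantCoeff] at h

lemma rec_ExpPS (n : ℕ) :
    coeff (n + 1) (ExpPS fexp) * ((n : R) + 1)
      = ∑ p ∈ Finset.HasAntidiagonal.antidiagonal n,
          coeff p.1 (ExpPS fexp) * coeff p.2 (d⁄dX R fexp) := by
  rw [← coeff_TrS_stable hfexp0 (by omega : (n + 1) + 1 ≤ n + 2)]
  have hd := PowerSeries.coeff_derivative (TrS fexp (n + 2)) n
  rw [show ((n : R) + 1) = ((n : ℕ) + 1 : R) by push_cast; ring] at *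
  rw [← hd, derivative_TrS, PowerSeries.coeff_mul]
  refine Finset.sum_congr rfl fun p hp => ?_
  rw [coeff_TrS_stable hfexp0
    (by have := Finset.HasAntidiagonal.antidiagonal.fst_le hp; omega)]

lemma coeff_dfexp (j : ℕ) :
    coeff j (d⁄dX R fexp) = (1 - (X : R) ^ (j + 1))⁻¹ := by
  rw [PowerSeries.coeff_derivative]
  have h1 : coeff (j + 1) fexp
      = (((j + 1 : ℕ) : ℚ)⁻¹) • (1 - (X : R) ^ (j + 1))⁻¹ := by
    simp [fexp]
  rw [h1, Algebra.smul_def]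
  have h2 : ((j : R) + 1) = algebraMap ℚ R (((j + 1 : ℕ) : ℚ)) := by
    rw [map_natCast]
    push_cast
    ring
  calc algebraMap ℚ R (((j + 1 : ℕ) : ℚ)⁻¹) * (1 - (X : R) ^ (j + 1))⁻¹ * ((j : R) + 1)
      = (algebraMap ℚ R (((j + 1 : ℕ) : ℚ)⁻¹) * algebraMap ℚ R (((j + 1 : ℕ) : ℚ)))
          * (1 - (X : R) ^ (j + 1))⁻¹ := by rw [h2]; ring
    _ = (1 - (X : R) ^ (j + 1))⁻¹ := by
        rw [← map_mul, inv_mul_cancel₀ (by positivity : (((j + 1 : ℕ) : ℚ)) ≠ 0)]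
        simp

lemma coeff_Gser (j : ℕ) : coeff j Gser = (Pprod j)⁻¹ := by
  rw [Gser, coeff_mk, coeffG_eq]

lemma rec_Gser (n : ℕ) :
    coeff (n + 1) Gser * ((n : R) + 1)
      = ∑ p ∈ Finset.HasAntidiagonal.antidiagonal n,
          coeff p.1 Gser * coeff p.2 (d⁄dX R fexp) := by
  have hR : ∑ p ∈ Finset.HasAntidiagonal.antidiagonal n,
        coeff p.1 Gser * coeff p.2 (d⁄dX R fexp)
      = ∑ k ∈ Finset.range (n + 1),
          (Pprod k)⁻¹ * (1 - (X : R) ^ (n - k + 1))⁻¹ := by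
    rw [Finset.Nat.sum_antidiagonal_eq_sum_range_succ_mk]
    exact Finset.sum_congr rfl fun k hk => by rw [coeff_Gser, coeff_dfexp]
  have hrefl : ∑ k ∈ Finset.range (n + 1),
        (Pprod k)⁻¹ * (1 - (X : R) ^ (n - k + 1))⁻¹
      = ∑ j ∈ Finset.range (n + 1),
          (1 - (X : R) ^ (j + 1))⁻¹ * (Pprod ((n + 1) - (j + 1)))⁻¹ := by
    rw [← Finset.sum_range_reflect
      (fun j => (1 - (X : R) ^ (j + 1))⁻¹ * (Pprod ((n + 1) - (j + 1)))⁻¹) (n + 1)]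
    refine Finset.sum_congr rfl fun k hk => ?_
    have hkn : k < n + 1 := Finset.mem_range.mp hk
    have e1 : n + 1 - 1 - k = n - k := by omega
    have e2 : n + 1 - (n - k + 1) = k := by omega
    simp only [e1, e2]
    rw [mul_comm]
  rw [hR, hrefl, keyR (n + 1), coeff_Gser]
  push_cast
  ring

lemma coeff_main : ∀ n, coeff n (ExpPS fexp) = coeff n Gser := by
  intro n
  induction n using Nat.strong_induction_on with
  | _ n ih =>
    match n with
    | 0 =>
      have hE : coeff 0 (ExpPS fexp) = 1 := by
        rw [coeff_ExpPS]
        simp [TrS]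
      have hG : coeff 0 Gser = 1 := by
        rw [coeff_Gser]
        rw [show Pprod 0 = 1 by unfold Pprod; rw [Finset.Icc_eq_empty (by omega)]; simp]
        exact inv_one
      rw [hE, hG]
    | Nat.succ m =>
      have hne : ((m : R) + 1) ≠ 0 := by
        intro h
        have h2 := congrArg (constantCoeff : PowerSeries ℚ →+* ℚ) h
        simp only [map_add, map_one, map_natCast, map_zero] at h2
        exact (by positivity : ((m : ℚ) + 1) ≠ 0) h2
      have hsum : ∑ p ∈ Finset.HasAntidiagonal.antidiagonal m,
            coeff p.1 (ExpPS fexp) * coeff p.2 (d⁄dX R fexp)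
          = ∑ p ∈ Finset.HasAntidiagonal.antidiagonal m,
            coeff p.1 Gser * coeff p.2 (d⁄dX R fexp) := by
        refine Finset.sum_congr rfl fun p hp => ?_
        rw [ih p.1 (by have := Finset.HasAntidiagonal.antidiagonal.fst_le hp; omega)]
      exact mul_right_cancel₀ hne ((rec_ExpPS m).trans (hsum.trans (rec_Gser m).symm))

end ExpSide

/-- In `ℚ[[q]][[x]]`: `exp (∑_{k≥1} x^k/(k(1-q^k))) = e_q(x/(1-q))`, where
`e_q(y) = ∑_n y^n/[n]_q!` is the q-exponential, so that
`e_q(x/(1-q)) = ∑_n x^n/((1-q)^n [n]_q!)`. -/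
theorem exp_eq_q_exponential :
    ExpPS (PowerSeries.mk fun k =>
        if k = 0 then 0
        else ((k : ℚ)⁻¹) • (1 - (PowerSeries.X : PowerSeries ℚ) ^ k)⁻¹)
      = PowerSeries.mk fun n =>
          ((1 - (PowerSeries.X : PowerSeries ℚ))⁻¹) ^ n * (qFact n)⁻¹ :=
  PowerSeries.ext coeff_main
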